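/- Let d ≥ 1 and let u be distributed on ℝ^d with the unit-scale truncated Cauchy density h, supported on the closed unit ball. Then E_u[‖u‖⁴] ≤ 1, and consequently the asymptotic mean-squared error of the TCSF scheme, AMSE_TCSF(γ₀,δ₀) = (c̄·δ₀²γ₀‖ΦT‖)² + (1/δ₀²)·trace(ΦP) with c̄ = E_u[‖u‖⁴], satisfies AMSE_TCSF(γ₀,δ₀) ≤ AMSE_GSF(γ₀,δ₀) and AMSE_TCSF(γ₀,δ₀) ≤ AMSE_SPSA(γ₀,δ₀), where AMSE_GSF is obtained by replacing c̄ with 3 and AMSE_SPSA by replacing c̄ with 1, for any vector T ∈ ℝ^d, positive semidefinite matrices Φ, P, and constants γ₀, δ₀ > 0. -/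

import Mathlib

open MeasureTheory Real Filter Topology ProbabilityTheory

/-- The truncated (to the `δ`-sphere) Cauchy density on `ℝ^d`, with normalizing
constant `c₁`: `h_δ(u) = Γ((d+1)/2)/(π^((d+1)/2) c₁ δ^d) · (1+‖u‖²/δ²)^(-(d+1)/2)`
for `‖u‖ ≤ δ` and `0` otherwise. -/
noncomputable def truncCauchy (d : ℕ) (c₁ δ : ℝ) (u : EuclideanSpace ℝ (Fin d)) : ℝ :=
  if ‖u‖ ≤ δ then
    Real.Gamma (((d : ℝ) + 1) / 2) / (Real.pi ^ (((d : ℝ) + 1) / 2) * c₁ * δ ^ d) *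
      (1 + ‖u‖ ^ 2 / δ ^ 2) ^ (-(((d : ℝ) + 1) / 2))
  else 0

/-- The unit-scale truncated Cauchy probability measure on `ℝ^d`. -/
noncomputable def truncCauchyMeasure (d : ℕ) (c₁ : ℝ) : Measure (EuclideanSpace ℝ (Fin d)) :=
  volume.withDensity fun v => ENNReal.ofReal (truncCauchy d c₁ 1 v)

lemma truncCauchy_nonneg (d : ℕ) (c₁ : ℝ) (hc₁ : 0 < c₁)
    (u : EuclideanSpace ℝ (Fin d)) : 0 ≤ truncCauchy d c₁ 1 u := by
  unfold truncCauchy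
  split
  · apply mul_nonneg
    · apply div_nonneg (Real.Gamma_pos_of_pos (by positivity)).le
      have : (0:ℝ) < Real.pi ^ (((d : ℝ) + 1) / 2) := Real.rpow_pos_of_pos Real.pi_pos _
      positivity
    · exact Real.rpow_nonneg (by positivity) _
  · exact le_refl 0

lemma truncCauchy_mul_le (d : ℕ) (c₁ : ℝ) (hc₁ : 0 < c₁)
    (u : EuclideanSpace ℝ (Fin d)) :
    truncCauchy d c₁ 1 u * ‖u‖ ^ 4 ≤ truncCauchy d c₁ 1 u := by
  have h0 := truncCauchy_nonneg d c₁ hc₁ u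
  by_cases h : ‖u‖ ≤ 1
  · calc truncCauchy d c₁ 1 u * ‖u‖ ^ 4 ≤ truncCauchy d c₁ 1 u * 1 := by
          apply mul_le_mul_of_nonneg_left _ h0
          calc ‖u‖ ^ 4 ≤ 1 ^ 4 := pow_le_pow_left₀ (norm_nonneg u) h 4
            _ = 1 := one_pow 4
      _ = truncCauchy d c₁ 1 u := mul_one _
  · simp [truncCauchy, h]

lemma truncCauchy_measurable (d : ℕ) (c₁ : ℝ) :
    Measurable (truncCauchy d c₁ 1) := by
  unfold truncCauchy
  apply Measurable.ite (measurableSet_le measurable_norm measurable_const)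
  · apply Measurable.mul measurable_const
    have hc : Continuous fun u : EuclideanSpace ℝ (Fin d) => 1 + ‖u‖ ^ 2 / (1:ℝ) ^ 2 :=
      continuous_const.add ((continuous_norm.pow 2).div_const _)
    exact (hc.rpow_const fun x => Or.inl (by positivity)).measurable
  · exact measurable_const

/-- AMSE comparison: for the unit-scale truncated Cauchy distribution `c̄ = E‖u‖⁴ ≤ 1`,
hence the asymptotic mean-squared error of TCSF,
`AMSE(c) = (c·δ₀²γ₀‖ΦT‖)² + (1/δ₀²)·trace(ΦP)`, is at most that of GSF (`c = 3`)
and of SPSA (`c = 1`). -/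
theorem tcsf_amse_comparison
    (d : ℕ) (hd : 0 < d) (c₁ : ℝ) (hc₁ : 0 < c₁)
    (hnorm : ∫ u : EuclideanSpace ℝ (Fin d), truncCauchy d c₁ 1 u = 1)
    (cbar : ℝ)
    (hcbar : cbar = ∫ u : EuclideanSpace ℝ (Fin d), truncCauchy d c₁ 1 u * ‖u‖ ^ 4) :
    cbar ≤ 1 ∧
    ∀ (T : Fin d → ℝ) (Φ Pm : Matrix (Fin d) (Fin d) ℝ),
      Φ.PosSemidef → Pm.PosSemidef →
      ∀ γ₀ δ₀ : ℝ, 0 < γ₀ → 0 < δ₀ →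
        ((cbar * δ₀ ^ 2 * γ₀ * Real.sqrt (∑ i, (Φ.mulVec T i) ^ 2)) ^ 2
            + (1 / δ₀ ^ 2) * (Φ * Pm).trace
          ≤ (3 * δ₀ ^ 2 * γ₀ * Real.sqrt (∑ i, (Φ.mulVec T i) ^ 2)) ^ 2
            + (1 / δ₀ ^ 2) * (Φ * Pm).trace) ∧
        ((cbar * δ₀ ^ 2 * γ₀ * Real.sqrt (∑ i, (Φ.mulVec T i) ^ 2)) ^ 2
            + (1 / δ₀ ^ 2) * (Φ * Pm).trace
          ≤ (1 * δ₀ ^ 2 * γ₀ * Real.sqrt (∑ i, (Φ.mulVec T i) ^ 2)) ^ 2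
            + (1 / δ₀ ^ 2) * (Φ * Pm).trace) := by
  have hint : Integrable (truncCauchy d c₁ 1) := by
    by_contra h
    rw [integral_undef h] at hnorm
    norm_num at hnorm
  have h4int : Integrable (fun u : EuclideanSpace ℝ (Fin d) =>
      truncCauchy d c₁ 1 u * ‖u‖ ^ 4) := by
    apply hint.mono'
    · exact ((truncCauchy_measurable d c₁).mul
        (measurable_norm.pow_const 4)).aestronglyMeasurable
    · filter_upwards with u
      rw [Real.norm_eq_abs, abs_of_nonneg
        (mul_nonneg (truncCauchy_nonneg d c₁ hc₁ u) (by positivity))]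
      exact truncCauchy_mul_le d c₁ hc₁ u
  have hcb1 : cbar ≤ 1 := by
    rw [hcbar]
    conv_rhs => rw [← hnorm]
    exact integral_mono h4int hint fun u => truncCauchy_mul_le d c₁ hc₁ u
  have hcb0 : 0 ≤ cbar := by
    rw [hcbar]
    exact integral_nonneg fun u =>
      mul_nonneg (truncCauchy_nonneg d c₁ hc₁ u) (by positivity)
  refine ⟨hcb1, fun T Φ Pm _ _ γ₀ δ₀ hγ hδ => ?_⟩
  set s := Real.sqrt (∑ i, (Φ.mulVec T i) ^ 2) with hs
  have hsnn : 0 ≤ s := Real.sqrt_nonneg _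
  constructor <;>
  · apply add_le_add_left
    apply pow_le_pow_left₀ (by positivity)
    have : cbar * δ₀ ^ 2 * γ₀ * s ≤ 1 * δ₀ ^ 2 * γ₀ * s := by
      gcongr
    nlinarith [mul_nonneg (mul_nonneg (sq_nonneg δ₀) hγ.le) hsnn]
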